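/- Let d be a metric on an abelian group E satisfying: for every C₁ > 1 there exists C₀ ≥ 0 such that for all q ≥ 2 and all x₁,…,x_q, y₁,…,y_q ∈ E, d(x₁+⋯+x_q, y₁+⋯+y_q) ≤ C₁·Σᵢ d(xᵢ,yᵢ) + q·C₀. Then for all x,y ∈ E the limit δ(x,y) = lim_{n→∞} d(n•x, n•y)/n exists (as a real number). -/
import Mathlib

open Filter

theorem stmt15 {E : Type*} [AddCommGroup E] (d : E → E → ℝ)
    (hnonneg : ∀ x y, 0 ≤ d x y)
    (hsymm : ∀ x y, d x y = d y x)
    (htri : ∀ x y z, d x z ≤ d x y + d y z)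
    (hsub : ∀ C₁ : ℝ, 1 < C₁ → ∃ C₀ : ℝ, 0 ≤ C₀ ∧ ∀ (q : ℕ), 2 ≤ q → ∀ x y : Fin q → E,
      d (∑ i, x i) (∑ i, y i) ≤ C₁ * ∑ i, d (x i) (y i) + q * C₀) :
    ∀ x y : E, ∃ L : ℝ,
      Filter.Tendsto (fun n : ℕ => d (n • x) (n • y) / n) Filter.atTop (nhds L) := by
  intro x y
  set a : ℕ → ℝ := fun n => d (n • x) (n • y) with ha
  set u : ℕ → ℝ := fun n => a n / n with hu
  have hanon : ∀ n, 0 ≤ a n := fun n => hnonneg _ _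
  have hunon : ∀ n, 0 ≤ u n := fun n => div_nonneg (hanon n) (Nat.cast_nonneg n)
  have ha1 : a 1 = d x y := by simp [ha]
  -- key structural inequality
  have key : ∀ C₁ C₀ : ℝ,
      (∀ (q : ℕ), 2 ≤ q → ∀ X Y : Fin q → E,
        d (∑ i, X i) (∑ i, Y i) ≤ C₁ * ∑ i, d (X i) (Y i) + q * C₀) →
      ∀ n q r : ℕ, 2 ≤ q →
        a (q * n + r) ≤ C₁ * (q * a n + r * a 1) + (q + r) * C₀ := by
    intro C₁ C₀ H n q r hq
    have hq2 : 2 ≤ q + r := le_trans hq (Nat.le_add_right q r)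
    have hX : ∀ z : E, (∑ i : Fin (q + r), (if (i : ℕ) < q then n • z else z))
        = (q * n + r) • z := by
      intro z
      rw [Fin.sum_univ_add]
      have h1 : (∑ i : Fin q, (if ((Fin.castAdd r i : Fin (q+r)) : ℕ) < q then n • z else z))
          = q • (n • z) := by
        rw [Finset.sum_congr rfl (fun i _ => if_pos (by simpa using i.isLt))]
        simp
      have h2 : (∑ i : Fin r, (if ((Fin.natAdd q i : Fin (q+r)) : ℕ) < q then n • z else z))
          = r • z := by
        rw [Finset.sum_congr rfl (fun i _ => if_neg (by simp))]
        simp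
      rw [h1, h2, add_smul, mul_smul]
    have hD : (∑ i : Fin (q + r),
        d (if (i : ℕ) < q then n • x else x) (if (i : ℕ) < q then n • y else y))
        = q * a n + r * a 1 := by
      rw [Fin.sum_univ_add]
      have h1 : (∑ i : Fin q,
          d (if ((Fin.castAdd r i : Fin (q+r)) : ℕ) < q then n • x else x)
            (if ((Fin.castAdd r i : Fin (q+r)) : ℕ) < q then n • y else y)) = q * a n := by
        rw [Finset.sum_congr rfl (fun i _ => by
          rw [if_pos (by simpa using i.isLt), if_pos (by simpa using i.isLt)])]
        simp [ha, mul_comm]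
      have h2 : (∑ i : Fin r,
          d (if ((Fin.natAdd q i : Fin (q+r)) : ℕ) < q then n • x else x)
            (if ((Fin.natAdd q i : Fin (q+r)) : ℕ) < q then n • y else y)) = r * a 1 := by
        rw [Finset.sum_congr rfl (fun i _ => by rw [if_neg (by simp), if_neg (by simp)])]
        simp [ha1, mul_comm]
      rw [h1, h2]
    have := H (q + r) hq2 (fun i => if (i : ℕ) < q then n • x else x)
      (fun i => if (i : ℕ) < q then n • y else y)
    rw [hX x, hX y, hD] at this
    simpa [ha] using this
  -- boundedness
  obtain ⟨C₀', hC₀', H'⟩ := hsub 2 one_lt_two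
  have hB : ∀ n, u n ≤ 2 * a 1 + C₀' := by
    intro n
    match n with
    | 0 => simpa [hu] using add_nonneg (by linarith [hanon 1]) hC₀'
    | 1 =>
      simp only [hu, Nat.cast_one, div_one]
      linarith [hanon 1]
    | (k+2) =>
      have hn : 2 ≤ k + 2 := by omega
      set n := k + 2
      have h2 := H' n hn (fun _ => x) (fun _ => y)
      have hsx : ∀ z : E, (∑ _i : Fin n, z) = n • z := by
        intro z; simp
      rw [hsx x, hsx y] at h2
      have hdsum : (∑ _i : Fin n, d x y) = n * a 1 := by simp [ha1, mul_comm]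
      rw [hdsum] at h2
      have hn0 : (0:ℝ) < n := by exact_mod_cast Nat.lt_of_lt_of_le (by norm_num) hn
      rw [hu, ha, div_le_iff₀ hn0]
      calc d (n • x) (n • y) ≤ 2 * (n * a 1) + n * C₀' := h2
        _ = (2 * a 1 + C₀') * n := by ring
  have hub : IsBoundedUnder (· ≤ ·) atTop u :=
    isBoundedUnder_of ⟨2 * a 1 + C₀', hB⟩
  have hlb : IsBoundedUnder (· ≥ ·) atTop u :=
    isBoundedUnder_of ⟨0, hunon⟩
  have hcob_ge : IsCoboundedUnder (· ≥ ·) atTop u := hub.isCoboundedUnder_ge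
  have hcob_le : IsCoboundedUnder (· ≤ ·) atTop u := hlb.isCoboundedUnder_le
  set ℓ : ℝ := liminf u atTop with hℓ
  set S : ℝ := limsup u atTop with hS
  have hℓ0 : 0 ≤ ℓ := le_liminf_of_le hcob_ge (Eventually.of_forall hunon)
  -- main step: S ≤ C₁ * ℓ for every C₁ > 1
  have hstep : ∀ C₁ : ℝ, 1 < C₁ → S ≤ C₁ * ℓ := by
    intro C₁ hC₁
    obtain ⟨C₀, hC₀, H⟩ := hsub C₁ hC₁
    have hC₁0 : (0:ℝ) < C₁ := by linarith
    have hn : ∀ n : ℕ, 1 ≤ n → S ≤ C₁ * u n + C₀ / n := by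
      intro n hn1
      have hn0 : (0:ℝ) < n := by exact_mod_cast hn1
      refine le_of_forall_pos_le_add ?_
      intro δ hδ
      set K : ℝ := C₁ * n * a 1 + n * C₀ with hK
      have hKlim : Tendsto (fun m : ℕ => K / m) atTop (nhds 0) :=
        tendsto_const_div_atTop_nhds_zero_nat K
      refine limsup_le_of_le hcob_le ?_
      filter_upwards [eventually_ge_atTop (2 * n), hKlim.eventually_lt_const hδ,
        eventually_ge_atTop 1] with m hm2n hKm hm1
      set q : ℕ := m / n with hq
      set r : ℕ := m % n with hr
      have hmeq : q * n + r = m := by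
        rw [hq, hr, mul_comm]; exact Nat.div_add_mod m n
      have hq2 : 2 ≤ q := (Nat.le_div_iff_mul_le (by omega)).2 hm2n
      have hrn : r < n := Nat.mod_lt _ (by omega)
      have hkey := key C₁ C₀ H n q r hq2
      rw [hmeq] at hkey
      have hm0 : (0:ℝ) < m := by exact_mod_cast hm1
      have hqnm : (q:ℝ) * n ≤ m := by exact_mod_cast hmeq ▸ Nat.le_add_right (q*n) r
      have hrn' : (r:ℝ) ≤ n := by exact_mod_cast hrn.le
      have hq0 : (0:ℝ) ≤ q := Nat.cast_nonneg q
      have hr0 : (0:ℝ) ≤ r := Nat.cast_nonneg r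
      have h1 : C₁ * (q * a n) / m ≤ C₁ * a n / n := by
        rw [div_le_div_iff₀ hm0 hn0]
        nlinarith [hanon n, mul_le_mul_of_nonneg_left hqnm (mul_nonneg hC₁0.le (hanon n))]
      have h2 : (q:ℝ) * C₀ / m ≤ C₀ / n := by
        rw [div_le_div_iff₀ hm0 hn0]
        nlinarith [mul_le_mul_of_nonneg_left hqnm hC₀]
      have h3 : (C₁ * (r * a 1) + r * C₀) / m ≤ K / m := by
        apply (div_le_div_iff_of_pos_right hm0).2
        have := hanon 1
        nlinarith [mul_le_mul_of_nonneg_left hrn' (mul_nonneg hC₁0.le (hanon 1)),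
          mul_le_mul_of_nonneg_left hrn' hC₀]
      calc u m = a m / m := rfl
        _ ≤ (C₁ * (q * a n + r * a 1) + (↑q + ↑r) * C₀) / m := (div_le_div_iff_of_pos_right hm0).2 hkey
        _ = C₁ * (q * a n) / m + (q:ℝ) * C₀ / m + (C₁ * (r * a 1) + r * C₀) / m := by
            ring
        _ ≤ C₁ * a n / n + C₀ / n + K / m := by
            exact add_le_add (add_le_add h1 h2) h3
        _ ≤ C₁ * u n + C₀ / n + δ := by
            rw [hu, mul_div_assoc]
            linarith [hKm]
    refine le_of_forall_pos_le_add ?_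
    intro ε hε
    set δ : ℝ := ε / (C₁ + 1) with hδdef
    have hδ : 0 < δ := div_pos hε (by linarith)
    have hfreq : ∃ᶠ n in atTop, u n < ℓ + δ :=
      frequently_lt_of_liminf_lt hcob_ge (by linarith)
    have hev : ∀ᶠ n : ℕ in atTop, C₀ / n < δ ∧ 1 ≤ n :=
      ((tendsto_const_div_atTop_nhds_zero_nat C₀).eventually_lt_const hδ).and
        (eventually_ge_atTop 1)
    obtain ⟨n, hn1, hn2, hn3⟩ := (hfreq.and_eventually hev).exists
    have hSn := hn n hn3
    have hδeq : (C₁ + 1) * δ = ε := by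
      rw [hδdef]; field_simp
    have hun : C₁ * u n ≤ C₁ * (ℓ + δ) := mul_le_mul_of_nonneg_left hn1.le hC₁0.le
    calc S ≤ C₁ * u n + C₀ / n := hSn
      _ ≤ C₁ * (ℓ + δ) + δ := by linarith
      _ = C₁ * ℓ + ε := by rw [← hδeq]; ring
  -- conclude S ≤ ℓ
  have hSl : S ≤ ℓ := by
    refine le_of_forall_pos_le_add ?_
    intro ε hε
    have hl1 : (0:ℝ) < ℓ + 1 := by linarith
    have hC := hstep (1 + ε / (ℓ + 1)) (by
      have := div_pos hε hl1; linarith)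
    have h2 : ε / (ℓ + 1) * ℓ ≤ ε := by
      rw [div_mul_eq_mul_div, div_le_iff₀ hl1]
      nlinarith
    have h3 : (1 + ε / (ℓ + 1)) * ℓ = ℓ + ε / (ℓ + 1) * ℓ := by ring
    linarith
  have heq : ℓ = S := le_antisymm (liminf_le_limsup hub hlb) hSl
  refine ⟨S, ?_⟩
  have := tendsto_of_liminf_eq_limsup (hℓ.symm.trans heq) hS.symm hub hlb
  exact this
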